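/- arXiv:1307.2790 — 2 statements merged into one kernel-verified Lean document; each statement's English description precedes it below -/
import Mathlib

section
/- (Feasibility of the N-QP) For every x ∈ X₀ and every integer N ≥ 1, the auxiliary control sequence u(τ) := K x(τ), τ = 0,…,N−1, where x(0) = x and x(τ+1) = Ā x(τ), is a feasible sequence for the N-QP at x; in particular, the feasible set of the N-QP at every x ∈ X₀ is nonempty. -/
open Matrix Finset Filter Topology

/-- The smallest eigenvalue of a (symmetric) real matrix. -/
noncomputable def lamMin {n : ℕ} (R : Matrix (Fin n) (Fin n) ℝ) : ℝ :=
  if h : R.IsHermitian then ⨅ i, h.eigenvalues i else 0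

/-- The largest eigenvalue of a (symmetric) real matrix. -/
noncomputable def lamMax {n : ℕ} (R : Matrix (Fin n) (Fin n) ℝ) : ℝ :=
  if h : R.IsHermitian then ⨆ i, h.eigenvalues i else 0

/-- The quadratic form `xᵀ R x`. -/
noncomputable def qf {p : ℕ} (R : Matrix (Fin p) (Fin p) ℝ) (x : Fin p → ℝ) : ℝ :=
  x ⬝ᵥ R.mulVec x

/-- λ := 1 − λ_min(Q̄)/λ_max(P̄). -/
noncomputable def lamParam {n : ℕ} (Qb Pb : Matrix (Fin n) (Fin n) ℝ) : ℝ :=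
  1 - lamMin Qb / lamMax Pb

/-- φ_N := (λ_max(P̄)·λ_max(P + KᵀQK)/λ_min(P̄))·(1 − λ^{N+1})/(1 − λ). -/
noncomputable def phi {n m : ℕ} (Qb Pb P : Matrix (Fin n) (Fin n) ℝ)
    (Q : Matrix (Fin m) (Fin m) ℝ) (K : Matrix (Fin m) (Fin n) ℝ) (N : ℕ) : ℝ :=
  (lamMax Pb * lamMax (P + Kᵀ * Q * K) / lamMin Pb) *
    ((1 - lamParam Qb Pb ^ (N + 1)) / (1 - lamParam Qb Pb))

/-- φ_∞ := λ_max(P̄)·λ_max(P + KᵀQK)/(λ_min(P̄)·(1 − λ)). -/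
noncomputable def phiInf {n m : ℕ} (Qb Pb P : Matrix (Fin n) (Fin n) ℝ)
    (Q : Matrix (Fin m) (Fin m) ℝ) (K : Matrix (Fin m) (Fin n) ℝ) : ℝ :=
  lamMax Pb * lamMax (P + Kᵀ * Q * K) / (lamMin Pb * (1 - lamParam Qb Pb))

/-- ψ := λ_max(KᵀQK + ĀᵀPĀ)/λ_min(P). -/
noncomputable def psiC {n m : ℕ} (P Abar : Matrix (Fin n) (Fin n) ℝ)
    (Q : Matrix (Fin m) (Fin m) ℝ) (K : Matrix (Fin m) (Fin n) ℝ) : ℝ :=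
  lamMax (Kᵀ * Q * K + Abarᵀ * P * Abar) / lamMin P

/-- χ := 1 − λ_min(P)/φ_∞. -/
noncomputable def chiC {n m : ℕ} (Qb Pb P : Matrix (Fin n) (Fin n) ℝ)
    (Q : Matrix (Fin m) (Fin m) ℝ) (K : Matrix (Fin m) (Fin n) ℝ) : ℝ :=
  1 - lamMin P / phiInf Qb Pb P Q K

/-- α_N := (λ_max(KᵀQK + ĀᵀPĀ)/λ_min(P))·∏_{κ=0}^{N−1}(1 − λ_min(P)/φ_{κ+1}). -/
noncomputable def alphaC {n m : ℕ} (Qb Pb P Abar : Matrix (Fin n) (Fin n) ℝ)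
    (Q : Matrix (Fin m) (Fin m) ℝ) (K : Matrix (Fin m) (Fin n) ℝ) (N : ℕ) : ℝ :=
  psiC P Abar Q K * ∏ κ ∈ Finset.range N, (1 - lamMin P / phi Qb Pb P Q K (κ + 1))

/-- γ_{N,S} := (1 − λ_min(P)/φ_∞)·max{1 + α_{N−S−1}, (1 + α_{N−1})·∏_{ℓ=N−S}^{N−1}(1 + α_ℓ)}. -/
noncomputable def gammaNS {n m : ℕ} (Qb Pb P Abar : Matrix (Fin n) (Fin n) ℝ)
    (Q : Matrix (Fin m) (Fin m) ℝ) (K : Matrix (Fin m) (Fin n) ℝ) (N S : ℕ) : ℝ :=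
  (1 - lamMin P / phiInf Qb Pb P Q K) *
    max (1 + alphaC Qb Pb P Abar Q K (N - S - 1))
      ((1 + alphaC Qb Pb P Abar Q K (N - 1)) *
        ∏ ℓ ∈ Finset.Ico (N - S) N, (1 + alphaC Qb Pb P Abar Q K ℓ))

/-- The trajectory of `x(τ+1) = A x(τ) + B u(τ)` from `x0` under the control sequence `u`. -/
def traj {n m : ℕ} (A : Matrix (Fin n) (Fin n) ℝ) (B : Matrix (Fin n) (Fin m) ℝ)
    (x0 : Fin n → ℝ) (u : ℕ → Fin m → ℝ) : ℕ → Fin n → ℝ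
  | 0 => x0
  | τ + 1 => A *ᵥ traj A B x0 u τ + B *ᵥ u τ

/-- Feasibility of a control sequence `u(0),…,u(N−1)` for the `N`-QP at `x`. -/
def Feasible {n m : ℕ} (A : Matrix (Fin n) (Fin n) ℝ) (B : Matrix (Fin n) (Fin m) ℝ)
    (X0 : Set (Fin n → ℝ)) (U : Set (Fin m → ℝ)) (N : ℕ) (x : Fin n → ℝ)
    (u : ℕ → Fin m → ℝ) : Prop :=
  (∀ τ < N, u τ ∈ U) ∧ (∀ τ < N, traj A B x u (τ + 1) ∈ X0)

/-- The cost `Σ_{τ=0}^{N−1}(x(τ)ᵀPx(τ) + u(τ)ᵀQu(τ)) + x(N)ᵀPx(N)` of the `N`-QP. -/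
noncomputable def cost {n m : ℕ} (A : Matrix (Fin n) (Fin n) ℝ) (B : Matrix (Fin n) (Fin m) ℝ)
    (P : Matrix (Fin n) (Fin n) ℝ) (Q : Matrix (Fin m) (Fin m) ℝ) (N : ℕ)
    (x : Fin n → ℝ) (u : ℕ → Fin m → ℝ) : ℝ :=
  (∑ τ ∈ Finset.range N, (qf P (traj A B x u τ) + qf Q (u τ))) + qf P (traj A B x u N)

/-- `V_N(x)`: the optimal value of the `N`-QP at `x`. -/
noncomputable def Vopt {n m : ℕ} (A : Matrix (Fin n) (Fin n) ℝ) (B : Matrix (Fin n) (Fin m) ℝ)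
    (P : Matrix (Fin n) (Fin n) ℝ) (Q : Matrix (Fin m) (Fin m) ℝ)
    (X0 : Set (Fin n → ℝ)) (U : Set (Fin m → ℝ)) (N : ℕ) (x : Fin n → ℝ) : ℝ :=
  sInf (cost A B P Q N x '' {u | Feasible A B X0 U N x u})

/-- Feasibility of the N-QP: for every `x ∈ X₀` and `N ≥ 1`, the auxiliary
control sequence `u(τ) := K x(τ)` with `x(0) = x`, `x(τ+1) = Ā x(τ)` (i.e. `x(τ) = Āᵗ x`)
is feasible for the `N`-QP at `x`; in particular the feasible set is nonempty. -/
theorem stmt3 {n m : ℕ}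
    (A : Matrix (Fin n) (Fin n) ℝ) (B : Matrix (Fin n) (Fin m) ℝ)
    (K : Matrix (Fin m) (Fin n) ℝ) (Qb Pb : Matrix (Fin n) (Fin n) ℝ)
    (hQb : Qb.PosDef) (hPb : Pb.PosDef)
    (hLyap : (A + B * K)ᵀ * Pb * (A + B * K) - Pb = -Qb)
    (c : ℝ) (hc : 0 < c)
    (X0 : Set (Fin n → ℝ)) (hX0 : X0 = {x : Fin n → ℝ | qf Pb x ≤ c})
    (X : Set (Fin n → ℝ)) (U : Set (Fin m → ℝ))
    (hX : Convex ℝ X) (hU : Convex ℝ U)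
    (h0X : (0 : Fin n → ℝ) ∈ X) (h0U : (0 : Fin m → ℝ) ∈ U)
    (hX0X : X0 ⊆ X) (hKU : ∀ x ∈ X, K *ᵥ x ∈ U)
    :
    ∀ x ∈ X0, ∀ N : ℕ, 1 ≤ N →
      Feasible A B X0 U N x (fun τ => K *ᵥ ((A + B * K) ^ τ *ᵥ x)) ∧
      ∃ u : ℕ → Fin m → ℝ, Feasible A B X0 U N x u := by
  intro x hx N hN
  set Ab := A + B * K with hAb
  -- trajectory equals Ab^τ x
  have htraj : ∀ τ, traj A B x (fun τ => K *ᵥ (Ab ^ τ *ᵥ x)) τ = Ab ^ τ *ᵥ x := by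
    intro τ
    induction τ with
    | zero => simp [traj]
    | succ τ ih =>
      simp only [traj, ih, pow_succ']
      simp only [hAb, Matrix.mulVec_mulVec]
      rw [← Matrix.add_mulVec, add_mul, Matrix.mul_assoc]
  -- descent of the Lyapunov function
  have hdesc : ∀ y : Fin n → ℝ, qf Pb (Ab *ᵥ y) ≤ qf Pb y := by
    intro y
    have h1 : qf Pb (Ab *ᵥ y) = y ⬝ᵥ (Abᵀ * Pb * Ab) *ᵥ y := by
      simp only [qf, ← Matrix.mulVec_mulVec, Matrix.dotProduct_mulVec,
        Matrix.vecMul_transpose]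
    have h2 : Abᵀ * Pb * Ab = -Qb + Pb := sub_eq_iff_eq_add.mp hLyap
    rw [h1, h2]
    have hQ : 0 ≤ y ⬝ᵥ Qb *ᵥ y := by simpa using hQb.posSemidef.dotProduct_mulVec_nonneg y
    have : y ⬝ᵥ (-Qb + Pb) *ᵥ y = -(y ⬝ᵥ Qb *ᵥ y) + y ⬝ᵥ Pb *ᵥ y := by
      rw [Matrix.add_mulVec, dotProduct_add, Matrix.neg_mulVec, dotProduct_neg]
    rw [this]
    simp only [qf]
    linarith
  -- invariance: Ab^τ x ∈ X0
  have hinv : ∀ τ, Ab ^ τ *ᵥ x ∈ X0 := by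
    intro τ
    induction τ with
    | zero => simpa using hx
    | succ τ ih =>
      rw [hX0] at ih ⊢
      have : Ab ^ (τ + 1) *ᵥ x = Ab *ᵥ (Ab ^ τ *ᵥ x) := by
        rw [pow_succ', ← Matrix.mulVec_mulVec]
      rw [Set.mem_setOf_eq, this]
      exact le_trans (hdesc _) ih
  have hfeas : Feasible A B X0 U N x (fun τ => K *ᵥ (Ab ^ τ *ᵥ x)) := by
    constructor
    · intro τ _
      exact hKU _ (hX0X (hinv τ))
    · intro τ _
      rw [htraj]
      exact hinv (τ + 1)
  exact ⟨hfeas, _, hfeas⟩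
end

section
/- (Positive-definite and decrescent properties of V_N) For every integer N ≥ 1 and every x ∈ X₀, the optimal value of the N-QP satisfies λ_min(P)·‖x‖² ≤ V_N(x) ≤ φ_N·‖x‖². -/
open Matrix Finset Filter Topology

section AuxLemmas
open Matrix Finset

lemma qf_decomp {n : ℕ} {R : Matrix (Fin n) (Fin n) ℝ} (hR : R.IsHermitian) (x : Fin n → ℝ) :
    ∃ y : Fin n → ℝ, qf R x = ∑ i, hR.eigenvalues i * (y i)^2 ∧ x ⬝ᵥ x = ∑ i, (y i)^2 := by
  set U : Matrix (Fin n) (Fin n) ℝ := (hR.eigenvectorUnitary : Matrix (Fin n) (Fin n) ℝ) with hUdef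
  have hU : U * star U = 1 := (Unitary.mem_iff.mp hR.eigenvectorUnitary.2).2
  have hstar : star U *ᵥ x = x ᵥ* U := Matrix.mulVec_transpose U x
  refine ⟨x ᵥ* U, ?_, ?_⟩
  · have hsp : R = U * Matrix.diagonal hR.eigenvalues * star U := by
      simpa using hR.spectral_theorem
    have key : x ⬝ᵥ R *ᵥ x = x ⬝ᵥ (U * Matrix.diagonal hR.eigenvalues * star U) *ᵥ x :=
      congrArg (fun M => x ⬝ᵥ M *ᵥ x) hsp
    rw [qf, key, ← Matrix.mulVec_mulVec, ← Matrix.mulVec_mulVec, hstar,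
      Matrix.dotProduct_mulVec]
    refine Finset.sum_congr rfl fun i _ => ?_
    rw [Matrix.mulVec_diagonal]
    ring
  · have h2 : (x ᵥ* U) ⬝ᵥ (x ᵥ* U) = x ⬝ᵥ x := by
      calc (x ᵥ* U) ⬝ᵥ (x ᵥ* U) = (x ᵥ* U) ⬝ᵥ (star U *ᵥ x) := by rw [hstar]
        _ = x ⬝ᵥ (U *ᵥ (star U *ᵥ x)) := (Matrix.dotProduct_mulVec x U _).symm
        _ = x ⬝ᵥ ((U * star U) *ᵥ x) := by rw [Matrix.mulVec_mulVec]
        _ = x ⬝ᵥ x := by rw [hU, Matrix.one_mulVec]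
    rw [← h2]
    simp [dotProduct, sq]

lemma lamMin_le_qf {n : ℕ} {R : Matrix (Fin n) (Fin n) ℝ} (hR : R.IsHermitian) (x : Fin n → ℝ) :
    lamMin R * (x ⬝ᵥ x) ≤ qf R x := by
  obtain ⟨y, h1, h2⟩ := qf_decomp hR x
  rw [h1, h2, lamMin, dif_pos hR, Finset.mul_sum]
  refine Finset.sum_le_sum fun i _ => ?_
  exact mul_le_mul_of_nonneg_right (ciInf_le (Set.finite_range _).bddBelow i) (sq_nonneg _)

lemma qf_le_lamMax {n : ℕ} {R : Matrix (Fin n) (Fin n) ℝ} (hR : R.IsHermitian) (x : Fin n → ℝ) :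
    qf R x ≤ lamMax R * (x ⬝ᵥ x) := by
  obtain ⟨y, h1, h2⟩ := qf_decomp hR x
  rw [h1, h2, lamMax, dif_pos hR, Finset.mul_sum]
  refine Finset.sum_le_sum fun i _ => ?_
  exact mul_le_mul_of_nonneg_right (le_ciSup (Set.finite_range _).bddAbove i) (sq_nonneg _)

lemma qf_conj {n k : ℕ} (M : Matrix (Fin k) (Fin k) ℝ) (C : Matrix (Fin k) (Fin n) ℝ)
    (z : Fin n → ℝ) : qf (Cᵀ * M * C) z = qf M (C *ᵥ z) := by
  rw [qf, qf, ← Matrix.mulVec_mulVec, ← Matrix.mulVec_mulVec, Matrix.dotProduct_mulVec,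
    Matrix.vecMul_transpose]

lemma qf_nonneg' {p : ℕ} {R : Matrix (Fin p) (Fin p) ℝ} (hR : R.PosSemidef) (x : Fin p → ℝ) :
    0 ≤ qf R x := by simpa [qf] using hR.dotProduct_mulVec_nonneg x

lemma qf_add' {p : ℕ} (R S : Matrix (Fin p) (Fin p) ℝ) (x : Fin p → ℝ) :
    qf (R + S) x = qf R x + qf S x := by
  simp [qf, Matrix.add_mulVec, dotProduct_add]

lemma qf_sub' {p : ℕ} (R S : Matrix (Fin p) (Fin p) ℝ) (x : Fin p → ℝ) :
    qf (R - S) x = qf R x - qf S x := by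
  simp [qf, Matrix.sub_mulVec, dotProduct_sub]

lemma unit_vec' {n : ℕ} (hn : 0 < n) :
    ∃ e : Fin n → ℝ, e ⬝ᵥ e = 1 ∧ e ≠ 0 := by
  refine ⟨Pi.single ⟨0, hn⟩ 1, ?_, ?_⟩
  · simp [dotProduct, Pi.single_apply]
  · intro h
    have := congrFun h ⟨0, hn⟩
    simp at this

lemma lamMin_pos' {n : ℕ} (hn : 0 < n) {R : Matrix (Fin n) (Fin n) ℝ} (hR : R.PosDef) :
    0 < lamMin R := by
  have : Nonempty (Fin n) := ⟨⟨0, hn⟩⟩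
  rw [lamMin, dif_pos hR.1]
  obtain ⟨i, hi⟩ := exists_eq_ciInf_of_finite (f := hR.1.eigenvalues)
  rw [← hi]
  exact hR.eigenvalues_pos i

end AuxLemmas

/-- Positive-definite and decrescent properties of V_N: for every `N ≥ 1`
and `x ∈ X₀`, `λ_min(P)·‖x‖² ≤ V_N(x) ≤ φ_N·‖x‖²`. -/
theorem stmt4 {n m : ℕ}
    (A : Matrix (Fin n) (Fin n) ℝ) (B : Matrix (Fin n) (Fin m) ℝ)
    (K : Matrix (Fin m) (Fin n) ℝ) (Qb Pb : Matrix (Fin n) (Fin n) ℝ)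
    (hQb : Qb.PosDef) (hPb : Pb.PosDef)
    (hLyap : (A + B * K)ᵀ * Pb * (A + B * K) - Pb = -Qb)
    (c : ℝ) (hc : 0 < c)
    (X0 : Set (Fin n → ℝ)) (hX0 : X0 = {x : Fin n → ℝ | qf Pb x ≤ c})
    (X : Set (Fin n → ℝ)) (U : Set (Fin m → ℝ))
    (hX : Convex ℝ X) (hU : Convex ℝ U)
    (h0X : (0 : Fin n → ℝ) ∈ X) (h0U : (0 : Fin m → ℝ) ∈ U)
    (hX0X : X0 ⊆ X) (hKU : ∀ x ∈ X, K *ᵥ x ∈ U)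
    (P : Matrix (Fin n) (Fin n) ℝ) (Q : Matrix (Fin m) (Fin m) ℝ)
    (hP : P.PosDef) (hQ : Q.PosDef)
    :
    ∀ N : ℕ, 1 ≤ N → ∀ x ∈ X0,
      lamMin P * (x ⬝ᵥ x) ≤ Vopt A B P Q X0 U N x ∧
      Vopt A B P Q X0 U N x ≤ phi Qb Pb P Q K N * (x ⬝ᵥ x) := by
  intro N hN x hx
  classical
  have hPpsd := hP.posSemidef
  have hQpsd := hQ.posSemidef
  have hcost_nn : ∀ u' : ℕ → Fin m → ℝ, 0 ≤ cost A B P Q N x u' := by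
    intro u'
    exact add_nonneg (Finset.sum_nonneg fun τ _ =>
      add_nonneg (qf_nonneg' hPpsd _) (qf_nonneg' hQpsd _)) (qf_nonneg' hPpsd _)
  have hbdd : BddBelow (cost A B P Q N x '' {u | Feasible A B X0 U N x u}) := by
    refine ⟨0, ?_⟩
    rintro b ⟨u', -, rfl⟩
    exact hcost_nn u'
  set Ab : Matrix (Fin n) (Fin n) ℝ := A + B * K with hAbdef
  by_cases hn : n = 0
  · subst hn
    have hdot0 : ∀ z w : Fin 0 → ℝ, z ⬝ᵥ w = 0 := by
      intro z w; simp [dotProduct]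
    have hqf0 : ∀ (R : Matrix (Fin 0) (Fin 0) ℝ) (z : Fin 0 → ℝ), qf R z = 0 :=
      fun R z => hdot0 _ _
    have hfeas0 : Feasible A B X0 U N x (fun _ => 0) := by
      constructor
      · intro τ _; exact h0U
      · intro τ _; rw [hX0]; simp only [Set.mem_setOf_eq, hqf0]; exact hc.le
    have hc0 : cost A B P Q N x (fun _ => 0) = 0 := by
      simp [cost, hqf0, qf]
    have hmem : (0:ℝ) ∈ cost A B P Q N x '' {u | Feasible A B X0 U N x u} :=
      ⟨_, hfeas0, hc0⟩
    have hV : Vopt A B P Q X0 U N x = 0 := by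
      unfold Vopt
      refine le_antisymm (csInf_le hbdd hmem) (le_csInf ⟨0, hmem⟩ ?_)
      rintro b ⟨u', -, rfl⟩
      exact hcost_nn u'
    rw [hV, hdot0]
    constructor <;> simp
  have hn' : 0 < n := Nat.pos_of_ne_zero hn
  obtain ⟨e, hee, he0⟩ := unit_vec' hn'
  set pm := lamMin Pb with hpm_def
  set pM := lamMax Pb with hpM_def
  set qm := lamMin Qb with hqm_def
  set a := lamMax (P + Kᵀ * Q * K) with ha_def
  set lam := lamParam Qb Pb with hlam_def
  have hPbpsd := hPb.posSemidef
  have hKQK : (Kᵀ * Q * K).PosSemidef := hQpsd.conjTranspose_mul_mul_same K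
  have hPKpsd : (P + Kᵀ * Q * K).PosSemidef := hPpsd.add hKQK
  have hpm : 0 < pm := lamMin_pos' hn' hPb
  have hpM : 0 < pM := by
    have h1 : qf Pb e ≤ pM * (e ⬝ᵥ e) := qf_le_lamMax hPb.1 e
    have h2 : 0 < qf Pb e := by simpa [qf] using hPb.dotProduct_mulVec_pos he0
    rw [hee, mul_one] at h1; linarith
  have hqm : 0 < qm := lamMin_pos' hn' hQb
  have ha : 0 ≤ a := by
    have h1 : qf (P + Kᵀ * Q * K) e ≤ a * (e ⬝ᵥ e) := qf_le_lamMax hPKpsd.1 e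
    have h2 : 0 ≤ qf (P + Kᵀ * Q * K) e := qf_nonneg' hPKpsd e
    rw [hee, mul_one] at h1; linarith
  have hLy : Abᵀ * Pb * Ab = Pb - Qb := by
    rw [sub_eq_iff_eq_add] at hLyap
    rw [hLyap, neg_add_eq_sub]
  have hqmpM : qm ≤ pM := by
    have h1 : qm * (e ⬝ᵥ e) ≤ qf Qb e := lamMin_le_qf hQb.1 e
    have h2 : qf Qb e ≤ qf Pb e := by
      have h3 : 0 ≤ qf (Pb - Qb) e := by
        rw [← hLy, qf_conj]
        exact qf_nonneg' hPbpsd _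
      rw [qf_sub'] at h3; linarith
    have h4 : qf Pb e ≤ pM * (e ⬝ᵥ e) := qf_le_lamMax hPb.1 e
    rw [hee, mul_one] at h1 h4; linarith
  have hlam_eq : lam = 1 - qm / pM := by
    rw [hlam_def, lamParam, hqm_def, hpM_def]
  have hlam0 : 0 ≤ lam := by
    rw [hlam_eq]
    have : qm / pM ≤ 1 := (div_le_one hpM).mpr hqmpM
    linarith
  have hlam1 : lam < 1 := by
    rw [hlam_eq]
    have : 0 < qm / pM := div_pos hqm hpM
    linarith
  have hstep : ∀ z, qf Pb (Ab *ᵥ z) ≤ lam * qf Pb z := by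
    intro z
    have h1 : qf Pb (Ab *ᵥ z) = qf Pb z - qf Qb z := by
      rw [← qf_conj, hLy, qf_sub']
    have h2 : qm * (z ⬝ᵥ z) ≤ qf Qb z := lamMin_le_qf hQb.1 z
    have h3 : qf Pb z ≤ pM * (z ⬝ᵥ z) := qf_le_lamMax hPb.1 z
    have h4 : (qm / pM) * qf Pb z ≤ qm * (z ⬝ᵥ z) := by
      rw [div_mul_eq_mul_div, div_le_iff₀ hpM]
      nlinarith
    have h5 : lam * qf Pb z = qf Pb z - (qm / pM) * qf Pb z := by rw [hlam_eq]; ring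
    linarith
  set xs : ℕ → Fin n → ℝ := fun τ => (Ab ^ τ) *ᵥ x with hxs_def
  set uu : ℕ → Fin m → ℝ := fun τ => K *ᵥ xs τ with huu_def
  have hxs0 : xs 0 = x := by
    rw [hxs_def]; simp [Matrix.one_mulVec]
  have hxs_succ : ∀ τ, xs (τ+1) = Ab *ᵥ xs τ := by
    intro τ
    rw [hxs_def]
    simp only
    rw [pow_succ', ← Matrix.mulVec_mulVec]
  have htraj : ∀ τ, traj A B x uu τ = xs τ := by
    intro τ
    induction τ with
    | zero => rw [hxs0]; rfl
    | succ τ ih =>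
      show A *ᵥ traj A B x uu τ + B *ᵥ uu τ = xs (τ+1)
      rw [ih, hxs_succ, hAbdef, Matrix.add_mulVec, ← Matrix.mulVec_mulVec]
  have hwnn : 0 ≤ qf Pb x := qf_nonneg' hPbpsd x
  have hdecay : ∀ τ, qf Pb (xs τ) ≤ lam ^ τ * qf Pb x := by
    intro τ
    induction τ with
    | zero => rw [hxs0, pow_zero, one_mul]
    | succ τ ih =>
      rw [hxs_succ]
      calc qf Pb (Ab *ᵥ xs τ) ≤ lam * qf Pb (xs τ) := hstep _
        _ ≤ lam * (lam ^ τ * qf Pb x) := mul_le_mul_of_nonneg_left ih hlam0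
        _ = lam ^ (τ+1) * qf Pb x := by ring
  have hxsX0 : ∀ τ, xs τ ∈ X0 := by
    intro τ
    rw [hX0, Set.mem_setOf_eq]
    have h1 : lam ^ τ ≤ 1 := pow_le_one₀ hlam0 hlam1.le
    have h2 := hdecay τ
    have h3 : qf Pb x ≤ c := by rw [hX0] at hx; exact hx
    nlinarith
  have hfeas : Feasible A B X0 U N x uu := by
    constructor
    · intro τ _
      exact hKU _ (hX0X (hxsX0 τ))
    · intro τ _
      rw [htraj]; exact hxsX0 _
  have hstage : ∀ z : Fin n → ℝ, qf P z + qf Q (K *ᵥ z) ≤ a / pm * qf Pb z := by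
    intro z
    have h0 : qf P z + qf Q (K *ᵥ z) = qf (P + Kᵀ * Q * K) z := by
      rw [qf_add', qf_conj]
    have h1 : qf (P + Kᵀ * Q * K) z ≤ a * (z ⬝ᵥ z) := qf_le_lamMax hPKpsd.1 z
    have h2 : pm * (z ⬝ᵥ z) ≤ qf Pb z := lamMin_le_qf hPb.1 z
    rw [h0, div_mul_eq_mul_div, le_div_iff₀ hpm]
    nlinarith [mul_le_mul_of_nonneg_left h2 ha, mul_le_mul_of_nonneg_right h1 hpm.le]
  have hcostub : cost A B P Q N x uu ≤
      a / pm * qf Pb x * ∑ τ ∈ Finset.range (N+1), lam ^ τ := by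
    unfold cost
    have hterm : ∀ τ, qf P (traj A B x uu τ) + qf Q (uu τ) ≤ a / pm * (lam ^ τ * qf Pb x) := by
      intro τ
      rw [htraj]
      have h1 := hstage (xs τ)
      have h3 : a / pm * qf Pb (xs τ) ≤ a / pm * (lam ^ τ * qf Pb x) :=
        mul_le_mul_of_nonneg_left (hdecay τ) (div_nonneg ha hpm.le)
      calc qf P (xs τ) + qf Q (uu τ) = qf P (xs τ) + qf Q (K *ᵥ xs τ) := by rw [huu_def]
        _ ≤ a / pm * qf Pb (xs τ) := h1
        _ ≤ _ := h3
    have hterm' : qf P (traj A B x uu N) ≤ a / pm * (lam ^ N * qf Pb x) := by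
      have h1 := hterm N
      have h2 : 0 ≤ qf Q (uu N) := qf_nonneg' hQpsd _
      linarith
    calc (∑ τ ∈ Finset.range N, (qf P (traj A B x uu τ) + qf Q (uu τ))) + qf P (traj A B x uu N)
        ≤ (∑ τ ∈ Finset.range N, a / pm * (lam ^ τ * qf Pb x)) + a / pm * (lam ^ N * qf Pb x) :=
          add_le_add (Finset.sum_le_sum fun τ _ => hterm τ) hterm'
      _ = ∑ τ ∈ Finset.range (N+1), a / pm * (lam ^ τ * qf Pb x) :=
          (Finset.sum_range_succ _ N).symm
      _ = a / pm * qf Pb x * ∑ τ ∈ Finset.range (N+1), lam ^ τ := by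
          rw [Finset.mul_sum]; exact Finset.sum_congr rfl fun τ _ => by ring
  have hlamne : lam ≠ 1 := ne_of_lt hlam1
  have hgeom : ∑ τ ∈ Finset.range (N+1), lam ^ τ = (1 - lam ^ (N+1)) / (1 - lam) := by
    rw [geom_sum_eq hlamne, ← neg_div_neg_eq]
    congr 1 <;> ring
  have hS0 : 0 ≤ ∑ τ ∈ Finset.range (N+1), lam ^ τ :=
    Finset.sum_nonneg fun τ _ => pow_nonneg hlam0 τ
  have hub2 : a / pm * qf Pb x * ∑ τ ∈ Finset.range (N+1), lam ^ τ ≤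
      phi Qb Pb P Q K N * (x ⬝ᵥ x) := by
    have hwub : qf Pb x ≤ pM * (x ⬝ᵥ x) := qf_le_lamMax hPb.1 x
    have hphi : phi Qb Pb P Q K N =
        pM * a / pm * ((1 - lam ^ (N+1)) / (1 - lam)) := by
      rw [phi, hpM_def, ha_def, hpm_def, hlam_def]
    rw [hphi, ← hgeom]
    have hc1 : 0 ≤ a / pm * ∑ τ ∈ Finset.range (N+1), lam ^ τ :=
      mul_nonneg (div_nonneg ha hpm.le) hS0
    calc a / pm * qf Pb x * ∑ τ ∈ Finset.range (N+1), lam ^ τ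
        = (a / pm * ∑ τ ∈ Finset.range (N+1), lam ^ τ) * qf Pb x := by ring
      _ ≤ (a / pm * ∑ τ ∈ Finset.range (N+1), lam ^ τ) * (pM * (x ⬝ᵥ x)) :=
          mul_le_mul_of_nonneg_left hwub hc1
      _ = pM * a / pm * (∑ τ ∈ Finset.range (N+1), lam ^ τ) * (x ⬝ᵥ x) := by ring
  have hmemu : cost A B P Q N x uu ∈ cost A B P Q N x '' {u | Feasible A B X0 U N x u} :=
    ⟨uu, hfeas, rfl⟩
  constructor
  · unfold Vopt
    refine le_csInf ⟨_, hmemu⟩ ?_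
    rintro b ⟨u', hu', rfl⟩
    have h1 : lamMin P * (x ⬝ᵥ x) ≤ qf P x := lamMin_le_qf hP.1 x
    have h2 : qf P x ≤ cost A B P Q N x u' := by
      unfold cost
      have h3 : qf P (traj A B x u' 0) + qf Q (u' 0) ≤
          ∑ τ ∈ Finset.range N, (qf P (traj A B x u' τ) + qf Q (u' τ)) :=
        Finset.single_le_sum (f := fun τ => qf P (traj A B x u' τ) + qf Q (u' τ))
          (fun τ _ => add_nonneg (qf_nonneg' hPpsd _) (qf_nonneg' hQpsd _))
          (Finset.mem_range.mpr hN)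
      have h4 : 0 ≤ qf Q (u' 0) := qf_nonneg' hQpsd _
      have h5 : 0 ≤ qf P (traj A B x u' N) := qf_nonneg' hPpsd _
      have h6 : traj A B x u' 0 = x := rfl
      rw [h6] at h3
      linarith
    linarith
  · unfold Vopt
    calc sInf (cost A B P Q N x '' {u | Feasible A B X0 U N x u})
        ≤ cost A B P Q N x uu := csInf_le hbdd hmemu
      _ ≤ _ := le_trans hcostub hub2
end
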